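/- Let P be a projection on a Hilbert space H̃ with range H, let R be a bounded self-adjoint operator on H̃, and f a concave function with f(0)=0 defined on an interval containing the spectrum of R and of PRP. Then Tr P f(R) P ≤ Tr f(PRP), whenever both sides are well-defined (e.g., in finite dimensions). -/

import Mathlib

open Set Matrix
open scoped ComplexOrder

lemma jensen_sub {a b : ℝ} (h0 : (0:ℝ) ∈ Icc a b) {f : ℝ → ℝ}
    (hf : ConcaveOn ℝ (Icc a b) f) (hf0 : f 0 = 0)
    {n : ℕ} (w lam : Fin n → ℝ) (hw : ∀ i, 0 ≤ w i) (hws : ∑ i, w i ≤ 1)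
    (hlam : ∀ i, lam i ∈ Icc a b) :
    ∑ i, w i * f (lam i) ≤ f (∑ i, w i * lam i) := by
  have h := hf.map_add_sum_le (t := Finset.univ) (w := w) (p := lam)
    (v := 1 - ∑ i, w i) (q := 0) (fun i _ => hw i) (by ring) (fun i _ => hlam i)
    (by linarith) h0
  simpa [hf0] using h

-- diagonal-entry computation
lemma diag_entry_re {d : ℕ} (M : Matrix (Fin d) (Fin d) ℂ) (g : Fin d → ℝ) (j : Fin d) :
    ((M * diagonal (fun i => (g i : ℂ)) * star M) j j).re
      = ∑ i, g i * Complex.normSq (M j i) := by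
  have hterm : ∀ i, M j i * (g i : ℂ) * star (M j i)
      = ((g i * Complex.normSq (M j i) : ℝ) : ℂ) := by
    intro i
    rw [show M j i * (g i : ℂ) * star (M j i)
        = (g i : ℂ) * (M j i * star (M j i)) by ring]
    rw [RCLike.star_def, Complex.mul_conj]
    push_cast
    ring
  have : (M * diagonal (fun i => (g i : ℂ)) * star M) j j
      = ((∑ i, g i * Complex.normSq (M j i) : ℝ) : ℂ) := by
    rw [Matrix.mul_apply]
    simp only [Matrix.mul_diagonal, Matrix.star_apply]
    rw [Finset.sum_congr rfl (fun i _ => hterm i)]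
    push_cast
    ring
  rw [this, Complex.ofReal_re]

theorem trace_projection_concave_ineq
    {d : ℕ} (P R : Matrix (Fin d) (Fin d) ℂ)
    (hPproj : P.IsHermitian ∧ P * P = P) (hR : R.IsHermitian)
    (hPRP : (P * R * P).IsHermitian)
    (a b : ℝ) (hab : a ≤ b) (h0 : (0:ℝ) ∈ Icc a b)
    (f : ℝ → ℝ) (hf : ConcaveOn ℝ (Icc a b) f) (hf0 : f 0 = 0)
    (hspecR : ∀ i, hR.eigenvalues i ∈ Icc a b)
    (hspecPRP : ∀ i, hPRP.eigenvalues i ∈ Icc a b) :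
    ((P * hR.cfc f * P).trace).re ≤ ((hPRP.cfc f).trace).re := by
  obtain ⟨hPh, hP2⟩ := hPproj
  set U : Matrix (Fin d) (Fin d) ℂ := (hR.eigenvectorUnitary : Matrix (Fin d) (Fin d) ℂ) with hUdef
  set V : Matrix (Fin d) (Fin d) ℂ := (hPRP.eigenvectorUnitary : Matrix (Fin d) (Fin d) ℂ) with hVdef
  have hU1 : U * star U = 1 := mem_unitaryGroup_iff.mp hR.eigenvectorUnitary.2
  have hU2 : star U * U = 1 := mem_unitaryGroup_iff'.mp hR.eigenvectorUnitary.2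
  have hV1 : V * star V = 1 := mem_unitaryGroup_iff.mp hPRP.eigenvectorUnitary.2
  have hV2 : star V * V = 1 := mem_unitaryGroup_iff'.mp hPRP.eigenvectorUnitary.2
  set lam : Fin d → ℝ := hR.eigenvalues
  set mu : Fin d → ℝ := hPRP.eigenvalues
  set M : Matrix (Fin d) (Fin d) ℂ := star V * P * U with hMdef
  have hstarM : star M = star U * P * V := by
    rw [hMdef, StarMul.star_mul, StarMul.star_mul, star_star,
      Matrix.star_eq_conjTranspose P, hPh.eq, mul_assoc]
  -- trace conjugation invariance
  have traceConj : ∀ X : Matrix (Fin d) (Fin d) ℂ, (star V * X * V).trace = X.trace := by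
    intro X
    rw [trace_mul_cycle, hV1, one_mul]
  -- E1 : conjugated LHS
  have E1 : star V * (P * hR.cfc f * P) * V
      = M * diagonal (fun i => ((f (lam i) : ℝ) : ℂ)) * star M := by
    rw [hstarM]
    simp only [Matrix.IsHermitian.cfc, Unitary.conjStarAlgAut_apply, Unitary.coe_star, hMdef]
    simp only [mul_assoc]
    rfl
  -- E2/E3 : M Dλ M* = diagonal μ
  have E2 : M * diagonal (fun i => ((lam i : ℝ) : ℂ)) * star M
      = diagonal (fun j => ((mu j : ℝ) : ℂ)) := by
    rw [hstarM]
    have hRdecomp : P * R * P = V * diagonal (fun j => ((mu j : ℝ) : ℂ)) * star V := by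
      have := hPRP.spectral_theorem
      simpa [Function.comp_def] using this
    have hRspec : R = U * diagonal (fun i => ((lam i : ℝ) : ℂ)) * star U := by
      have := hR.spectral_theorem
      simpa [Function.comp_def] using this
    have key : star V * (P * R * P) * V = diagonal (fun j => ((mu j : ℝ) : ℂ)) := by
      rw [hRdecomp]
      calc star V * (V * diagonal (fun j => ((mu j : ℝ) : ℂ)) * star V) * V
          = (star V * V) * diagonal (fun j => ((mu j : ℝ) : ℂ)) * (star V * V) := by
            simp only [mul_assoc]
        _ = _ := by rw [hV2, one_mul, mul_one]
    rw [← key, hRspec, hMdef]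
    simp only [mul_assoc]
  -- E4 : M M* = V* P V
  have E4 : M * star M = star V * P * V := by
    rw [hstarM, hMdef]
    calc star V * P * U * (star U * P * V) = star V * P * (U * star U) * P * V := by
          simp only [mul_assoc]
      _ = star V * (P * P) * V := by rw [hU1]; simp only [mul_assoc, one_mul]
      _ = star V * P * V := by rw [hP2]
  -- weights
  set w : Fin d → Fin d → ℝ := fun j i => Complex.normSq (M j i) with hwdef
  -- LHS as double sum
  have LHS_eq : ((P * hR.cfc f * P).trace).re
      = ∑ j, ∑ i, w j i * f (lam i) := by
    rw [← traceConj (P * hR.cfc f * P), E1, Matrix.trace, Complex.re_sum]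
    refine Finset.sum_congr rfl fun j _ => ?_
    rw [Matrix.diag_apply, diag_entry_re M (fun i => f (lam i)) j]
    exact Finset.sum_congr rfl fun i _ => mul_comm _ _
  -- RHS as sum
  have RHS_eq : ((hPRP.cfc f).trace).re = ∑ j, f (mu j) := by
    have hcfc : hPRP.cfc f
        = V * diagonal (fun j => ((f (mu j) : ℝ) : ℂ)) * star V := by
      simp only [Matrix.IsHermitian.cfc, Unitary.conjStarAlgAut_apply, Unitary.coe_star]
      rfl
    rw [hcfc, trace_mul_cycle, hV2, one_mul, trace_diagonal, Complex.re_sum]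
    simp
  -- per-row facts
  have hw0 : ∀ j i, 0 ≤ w j i := fun j i => Complex.normSq_nonneg _
  have hmean : ∀ j, ∑ i, w j i * lam i = mu j := by
    intro j
    have h := congrArg (fun X : Matrix (Fin d) (Fin d) ℂ => (X j j).re) E2
    rw [diag_entry_re M lam j] at h
    rw [show (∑ i, w j i * lam i) = ∑ i, lam i * Complex.normSq (M j i) from
      Finset.sum_congr rfl fun i _ => mul_comm _ _]
    rw [h, Matrix.diagonal_apply_eq, Complex.ofReal_re]
  have hwsum : ∀ j, ∑ i, w j i ≤ 1 := by
    intro j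
    have h1 : ∑ i, w j i = ((star V * P * V) j j).re := by
      have h := diag_entry_re M (fun _ => (1 : ℝ)) j
      rw [show diagonal (fun i : Fin d => ((1:ℝ) : ℂ)) = (1 : Matrix (Fin d) (Fin d) ℂ)
          by simp [Matrix.diagonal_one], mul_one, E4] at h
      rw [h]
      exact Finset.sum_congr rfl fun i _ => (one_mul _).symm
    set N : Matrix (Fin d) (Fin d) ℂ := star V * (1 - P) with hNdef
    have hstarN : star N = (1 - P) * V := by
      rw [hNdef, StarMul.star_mul, star_star, star_sub, star_one,
        Matrix.star_eq_conjTranspose P, hPh.eq]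
    have h1P : (1 - P) * (1 - P) = (1 : Matrix (Fin d) (Fin d) ℂ) - P := by
      rw [sub_mul, one_mul, mul_sub, mul_one, hP2]
      abel
    have hNN : N * star N = 1 - star V * P * V := by
      rw [hstarN, hNdef]
      calc star V * (1 - P) * ((1 - P) * V)
          = star V * ((1 - P) * (1 - P)) * V := by simp only [mul_assoc]
        _ = star V * (1 - P) * V := by rw [h1P]
        _ = star V * V - star V * P * V := by rw [mul_sub, sub_mul, mul_one]
        _ = 1 - star V * P * V := by rw [hV2]
    have hpos : 0 ≤ ((N * star N) j j).re := by
      have h := diag_entry_re N (fun _ => (1 : ℝ)) j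
      rw [show diagonal (fun i : Fin d => ((1:ℝ) : ℂ)) = (1 : Matrix (Fin d) (Fin d) ℂ)
          by simp [Matrix.diagonal_one], mul_one] at h
      rw [h]
      exact Finset.sum_nonneg fun i _ => by simpa using Complex.normSq_nonneg (N j i)
    rw [hNN] at hpos
    simp only [Matrix.sub_apply, Matrix.one_apply_eq, Complex.sub_re, Complex.one_re] at hpos
    linarith [h1, hpos]
  -- Jensen per row
  have key : ∀ j, ∑ i, w j i * f (lam i) ≤ f (mu j) := by
    intro j
    have := jensen_sub h0 hf hf0 (w j) lam (hw0 j) (hwsum j) hspecR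
    rwa [hmean j] at this
  rw [LHS_eq, RHS_eq]
  exact Finset.sum_le_sum fun j _ => key j
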